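/- Let (C_j)_{j∈ℕ} be a sequence of linear orders and let L = Σ_{i∈ℕ} (Σ_{j≤i} C_j) be the lexicographic sum over ℕ of the finite lexicographic sums Σ_{j≤i} C_j. Then for every x ∈ L, L order-embeds into the final segment {y ∈ L : x ≤ y}; consequently, L is bi-embeddable with each of its nonempty final segments. -/

import Mathlib

/-- The lexicographic sum `Σ_{i∈ℕ} (Σ_{j≤i} C_j)`. -/
abbrev NatSumOrder (C : ℕ → Type*) [∀ j, LinearOrder (C j)] : Type _ :=
  Lex ((i : ℕ) × Lex ((j : Fin (i + 1)) × C j.val))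

/-- Let `L = Σ_{i∈ℕ} (Σ_{j≤i} C_j)`.  Then for every `x ∈ L`, `L` order-embeds into the
final segment `{y : x ≤ y}`; consequently `L` is bi-embeddable with each of its nonempty
final segments. -/
theorem natSumOrder_embeds_finalSegment (C : ℕ → Type*) [∀ j, LinearOrder (C j)] :
    (∀ x : NatSumOrder C, Nonempty (NatSumOrder C ↪o {y : NatSumOrder C // x ≤ y})) ∧
      ∀ S : Set (NatSumOrder C), S.Nonempty → (∀ ⦃a b : NatSumOrder C⦄, a ∈ S → a ≤ b → b ∈ S) →
        Nonempty (NatSumOrder C ↪o ↥S) ∧ Nonempty (↥S ↪o NatSumOrder C) := by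
  have key : ∀ x : NatSumOrder C, Nonempty (NatSumOrder C ↪o {y : NatSumOrder C // x ≤ y}) := by
    intro x
    set n := (ofLex x).1 with hn
    let g : NatSumOrder C → NatSumOrder C := fun y =>
      toLex ⟨n + 1 + (ofLex y).1,
        toLex ⟨⟨((ofLex (ofLex y).2)).1.val, by omega⟩, (ofLex (ofLex y).2).2⟩⟩
    have hg : StrictMono g := by
      intro a b hab
      obtain ⟨i, a2⟩ := a
      obtain ⟨j, b2⟩ := b
      obtain ⟨⟨u, hu⟩, a3⟩ := a2
      obtain ⟨⟨v, hv⟩, b3⟩ := b2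
      erw [Sigma.Lex.lt_def] at hab ⊢
      rcases hab with h | ⟨h1, h2⟩
      · left
        show n + 1 + i < n + 1 + j
        have : i < j := h
        omega
      · have h1' : i = j := h1
        subst h1'
        right
        refine ⟨rfl, ?_⟩
        have h2' : (toLex (⟨⟨u, hu⟩, a3⟩ : (j : Fin (i + 1)) × C j.val)) <
            toLex ⟨⟨v, hv⟩, b3⟩ := h2
        erw [Sigma.Lex.lt_def] at h2' ⊢
        rcases h2' with h | ⟨h3, h4⟩
        · left
          show u < v
          exact h
        · have huv : u = v := congrArg Fin.val h3
          subst huv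
          right
          exact ⟨rfl, h4⟩
    have hx : ∀ y, x < g y := by
      intro y
      rw [Sigma.Lex.lt_def]
      left
      show n < n + 1 + (ofLex y).1
      omega
    exact ⟨OrderEmbedding.ofStrictMono (fun y => ⟨g y, (hx y).le⟩)
      (fun a b hab => by simpa [Subtype.mk_lt_mk] using hg hab)⟩
  refine ⟨key, fun S hS hup => ?_⟩
  obtain ⟨a, ha⟩ := hS
  obtain ⟨f⟩ := key a
  refine ⟨⟨f.trans ⟨⟨fun z => ⟨z.1, hup ha z.2⟩, fun u v huv => by
    simpa [Subtype.ext_iff] using huv⟩, by intro u v; exact Iff.rfl⟩⟩, ⟨OrderEmbedding.subtype _⟩⟩
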